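/- For n ≥ 2, the subgroup b_n(3,(2²)) of degree-3 special derivations supported on words with two x_1's and two x_2's is free abelian of rank 1, generated by x_1^* ⊗ [x_2,x_1,x_2,x_1] + x_2^* ⊗ [x_1,x_2,x_1,x_2]. -/

import Mathlib

open scoped TensorProduct

/-- The degree-`k` homogeneous part of the free Lie ring on `n` generators. -/
noncomputable def Ln (n : ℕ) : ℕ → Submodule ℤ (FreeLieAlgebra ℤ (Fin n))
  | 0 => ⊥
  | 1 => Submodule.span ℤ (Set.range (FreeLieAlgebra.of ℤ))
  | (k+2) => Submodule.span ℤ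
      {y | ∃ a ∈ Ln n (k+1), ∃ i : Fin n, y = ⁅a, FreeLieAlgebra.of ℤ i⁆}

/-- The tangential derivation module `p_n(k)`, in the representation
`H^* ⊗ L_n(k+1) ≅ (Fin n → L_n)` (the `i`-th component records `C_i` in
`Σᵢ x_i^* ⊗ C_i`), spanned by the elements `x_i^* ⊗ [c, x_i]` with `c ∈ L_n(k)`. -/
noncomputable def pnM (n k : ℕ) : Submodule ℤ (Fin n → FreeLieAlgebra ℤ (Fin n)) :=
  Submodule.span ℤ
    {f | ∃ i : Fin n, ∃ c ∈ Ln n k, f = Pi.single i ⁅c, FreeLieAlgebra.of ℤ i⁆}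

/-- Summation map sending `Σᵢ x_i^* ⊗ C_i` to `Σᵢ C_i`. -/
noncomputable def sumMap (n : ℕ) :
    (Fin n → FreeLieAlgebra ℤ (Fin n)) →ₗ[ℤ] FreeLieAlgebra ℤ (Fin n) :=
  LinearMap.lsum ℤ (fun _ : Fin n => FreeLieAlgebra ℤ (Fin n)) ℤ (fun _ => LinearMap.id)

attribute [local instance 100] LieRing.ofAssociativeRing

/-- Test matrix for `x₀`. -/
def bnX : Matrix (Fin 5) (Fin 5) ℤ :=
  !![0,0,0,0,0; 0,0,1,0,0; 0,0,0,0,0; 0,0,0,0,1; 0,0,0,0,0]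

/-- Test matrix for `x₁`. -/
def bnY : Matrix (Fin 5) (Fin 5) ℤ :=
  !![0,1,0,0,0; 0,0,0,0,0; 0,0,0,1,0; 0,0,0,0,0; 0,0,0,0,0]

/-- Evaluation Lie homomorphism to a matrix algebra. -/
noncomputable def bnPhi (n : ℕ) :
    FreeLieAlgebra ℤ (Fin n) →ₗ⁅ℤ⁆ Matrix (Fin 5) (Fin 5) ℤ :=
  FreeLieAlgebra.lift ℤ (fun i => if i.val = 0 then bnX else if i.val = 1 then bnY else 0)

lemma bn_skew {L : Type*} [LieRing L] (a b : L) :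
    ⁅⁅⁅b, a⁆, b⁆, a⁆ + ⁅⁅⁅a, b⁆, a⁆, b⁆ = 0 := by
  have h : ⁅⁅⁅a, b⁆, a⁆, b⁆ = ⁅⁅⁅a, b⁆, b⁆, a⁆ := by
    rw [lie_lie ⁅a, b⁆ a b, lie_self, zero_sub, lie_skew]
  rw [h, show ⁅b, a⁆ = -⁅a, b⁆ from (lie_skew b a).symm, neg_lie, neg_lie, neg_add_cancel]

lemma bn_entry : (⁅⁅⁅bnY, bnX⁆, bnY⁆, bnX⁆ : Matrix (Fin 5) (Fin 5) ℤ) 0 4 = 2 := by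
  simp [Ring.lie_def, bnX, bnY, Matrix.mul_apply, Fin.sum_univ_five, Matrix.sub_apply]

/-- For `n ≥ 2`, the degree-3 special derivations supported on words with two `x₁`s and
two `x₂`s form a rank-one free abelian group generated by
`x₁^* ⊗ [x₂,x₁,x₂,x₁] + x₂^* ⊗ [x₁,x₂,x₁,x₂]`. -/
theorem bn_three_two_two (n : ℕ) (hn : 2 ≤ n) :
    let x : Fin n → FreeLieAlgebra ℤ (Fin n) := FreeLieAlgebra.of ℤ
    let i0 : Fin n := ⟨0, by omega⟩
    let i1 : Fin n := ⟨1, by omega⟩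
    let pα : Submodule ℤ (Fin n → FreeLieAlgebra ℤ (Fin n)) :=
      Submodule.span ℤ
        {Pi.single i0 ⁅⁅⁅x i1, x i0⁆, x i1⁆, x i0⁆,
         Pi.single i1 ⁅⁅⁅x i0, x i1⁆, x i0⁆, x i1⁆}
    let g : Fin n → FreeLieAlgebra ℤ (Fin n) :=
      Pi.single i0 ⁅⁅⁅x i1, x i0⁆, x i1⁆, x i0⁆ +
        Pi.single i1 ⁅⁅⁅x i0, x i1⁆, x i0⁆, x i1⁆
    pα ⊓ LinearMap.ker (sumMap n) = Submodule.span ℤ {g} ∧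
      Module.finrank ℤ ↥(pα ⊓ LinearMap.ker (sumMap n)) = 1 := by
  intro x i0 i1 pα g
  have hx : x = FreeLieAlgebra.of ℤ := rfl
  have hi : i0 ≠ i1 := by
    intro h
    have : (0 : ℕ) = 1 := congrArg Fin.val h
    omega
  set A : FreeLieAlgebra ℤ (Fin n) := ⁅⁅⁅x i1, x i0⁆, x i1⁆, x i0⁆ with hA
  set B : FreeLieAlgebra ℤ (Fin n) := ⁅⁅⁅x i0, x i1⁆, x i0⁆, x i1⁆ with hB
  have hg : g = Pi.single i0 A + Pi.single i1 B := rfl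
  have hpα : pα = Submodule.span ℤ {Pi.single i0 A, Pi.single i1 B} := rfl
  have hAB : A + B = 0 := bn_skew (x i0) (x i1)
  have hBA : B = -A := (neg_eq_of_add_eq_zero_right hAB).symm
  -- evaluation homomorphism facts
  have hx0 : bnPhi n (x i0) = bnX := by
    rw [hx, bnPhi]
    erw [FreeLieAlgebra.lift_of_apply]
    have h0 : (i0 : Fin n).val = 0 := rfl
    rw [if_pos h0]
  have hx1 : bnPhi n (x i1) = bnY := by
    rw [hx, bnPhi]
    erw [FreeLieAlgebra.lift_of_apply]
    have h1 : (i1 : Fin n).val = 1 := rfl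
    rw [if_neg (by omega), if_pos h1]
  have hφA : bnPhi n A 0 4 = 2 := by
    rw [hA]
    simp only [LieHom.map_lie, hx0, hx1]
    exact bn_entry
  have key : ∀ t : ℤ, t • A = 0 → t = 0 := by
    intro t ht
    have h1 : t • bnPhi n A = 0 := by
      rw [← map_smul, ht, map_zero]
    have h2 := congrFun (congrFun h1 0) 4
    rw [Matrix.smul_apply, hφA, Matrix.zero_apply, smul_eq_mul] at h2
    omega
  -- sums of single functions
  have hss : ∀ (i : Fin n) (c : FreeLieAlgebra ℤ (Fin n)),
      sumMap n (Pi.single i c) = c := by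
    intro i c
    simp [sumMap, LinearMap.lsum_apply, LinearMap.sum_apply, LinearMap.comp_apply,
      LinearMap.proj_apply, Finset.sum_pi_single']
  have hgsum : sumMap n g = 0 := by
    rw [hg, map_add, hss, hss, hAB]
  have hgmem : g ∈ pα ⊓ LinearMap.ker (sumMap n) := by
    refine ⟨?_, hgsum⟩
    rw [hpα, hg]
    exact add_mem (Submodule.subset_span (Set.mem_insert _ _))
      (Submodule.subset_span (Set.mem_insert_of_mem _ rfl))
  have hspan : pα ⊓ LinearMap.ker (sumMap n) = Submodule.span ℤ {g} := by
    apply le_antisymm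
    · intro p hp
      obtain ⟨hp1, hp2⟩ := Submodule.mem_inf.mp hp
      rw [LinearMap.mem_ker] at hp2
      rw [hpα, Submodule.mem_span_pair] at hp1
      obtain ⟨a, b, hab⟩ := hp1
      have hps : sumMap n p = (a - b) • A := by
        rw [← hab, map_add, map_smul, map_smul, hss, hss, hBA, sub_smul]
        module
      have hzero : (a - b) • A = 0 := by
        rw [← hps]; exact hp2
      have hab0 : a = b := by have := key _ hzero; omega
      rw [Submodule.mem_span_singleton]
      refine ⟨a, ?_⟩
      rw [hg, ← hab, hab0]
      module
    · rw [Submodule.span_le, Set.singleton_subset_iff]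
      exact hgmem
  refine ⟨hspan, ?_⟩
  rw [hspan]
  -- the span of g is free of rank one
  have hinj : Function.Injective
      (LinearMap.toSpanSingleton ℤ (Fin n → FreeLieAlgebra ℤ (Fin n)) g) := by
    rw [injective_iff_map_eq_zero]
    intro t ht
    rw [LinearMap.toSpanSingleton_apply] at ht
    apply key t
    have h0 := congrFun ht i0
    rw [hg] at h0
    simpa [Pi.single_eq_same, Pi.single_eq_of_ne hi] using h0
  have e : (ℤ ≃ₗ[ℤ] ↥(Submodule.span ℤ {g})) :=
    (LinearEquiv.ofInjective _ hinj).trans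
      (LinearEquiv.ofEq _ _ (LinearMap.span_singleton_eq_range ℤ _ g).symm)
  rw [← e.finrank_eq]
  exact Module.finrank_self ℤ
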